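/- Let Γ = Cay(G,S) be a connected abelian Cayley graph with transfer matrix H(t). Then Γ has (α,β)-fractional revival from some vertex x to some vertex y at time t if and only if H(t) = αI + βQ where Q is a symmetric permutation matrix with Q² = I and no fixed points; moreover in this case α·conj(β) + conj(α)·β = 0. -/

import Mathlib

open Matrix

/-- An abelian Cayley graph has `(α,β)`-fractional revival between some
pair of distinct vertices at time `t` iff `H(t) = α I + β Q` for a symmetric
permutation matrix `Q` with `Q² = I` and no fixed points; moreover, in that case
`α conj(β) + conj(α) β = 0`. -/
theorem fractional_revival_iff_perm_matrix
    (G : Type) [AddCommGroup G] [Fintype G] [DecidableEq G]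
    (S : Finset G) (hS : ∀ s : G, s ∈ S ↔ -s ∈ S)
    (hgen : AddSubgroup.closure (S : Set G) = ⊤)
    (A : Matrix G G ℂ) (hA : ∀ g h : G, A g h = if g - h ∈ S then 1 else 0)
    (t : ℝ) (Ht : Matrix G G ℂ)
    (hHt : Ht = NormedSpace.exp ((Complex.I * (t : ℂ)) • A))
    (α β : ℂ) (hβ : β ≠ 0) (hnorm : ‖α‖ ^ 2 + ‖β‖ ^ 2 = 1) :
    ((∃ x y : G, x ≠ y ∧
        Ht *ᵥ (Pi.single x 1 : G → ℂ) = α • (Pi.single x 1 : G → ℂ) + β • (Pi.single y 1 : G → ℂ)) ↔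
      (∃ σ : Equiv.Perm G, (∀ g : G, σ g ≠ g) ∧ σ * σ = 1 ∧
        (σ.permMatrix ℂ)ᵀ = σ.permMatrix ℂ ∧
        Ht = α • (1 : Matrix G G ℂ) + β • σ.permMatrix ℂ)) ∧
    ((∃ x y : G, x ≠ y ∧
        Ht *ᵥ (Pi.single x 1 : G → ℂ) = α • (Pi.single x 1 : G → ℂ) + β • (Pi.single y 1 : G → ℂ)) →
      α * (starRingEnd ℂ) β + (starRingEnd ℂ) α * β = 0) := by
  subst hHt
  set M : Matrix G G ℂ := (Complex.I * (t : ℂ)) • A with hMdef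
  set E : Matrix G G ℂ := NormedSpace.exp M with hEdef
  -- A is symmetric
  have hAsymm : Aᵀ = A := by
    ext g h
    simp only [transpose_apply, hA]
    have : h - g ∈ S ↔ g - h ∈ S := by rw [hS (h - g), neg_sub]
    exact if_congr this rfl rfl
  have hAsymm' : ∀ g h : G, A h g = A g h := fun g h => by
    rw [hA, hA]
    have : h - g ∈ S ↔ g - h ∈ S := by rw [hS (h - g), neg_sub]
    exact if_congr this rfl rfl
  -- entries of A are real
  have hAreal : ∀ g h : G, star (A g h) = A g h := fun g h => by
    rw [hA]; split_ifs <;> simp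
  have hMsymm : Mᵀ = M := by rw [hMdef, transpose_smul, hAsymm]
  have hEsymmM : Eᵀ = E := by rw [hEdef, ← Matrix.exp_transpose, hMsymm]
  have hEsymm : ∀ g h : G, E h g = E g h := fun g h => by
    rw [← transpose_apply E g h, hEsymmM]
  -- E is unitary
  have hMH : Mᴴ = -M := by
    ext g h
    simp only [hMdef, conjTranspose_apply, Matrix.smul_apply, Matrix.neg_apply, smul_eq_mul,
      star_mul', hAreal, hAsymm', _root_.map_mul, Complex.conj_I, Complex.conj_ofReal, Complex.star_def]
    ring
  have hU : Eᴴ * E = 1 := by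
    rw [hEdef, ← Matrix.exp_conjTranspose, hMH,
      ← Matrix.exp_add_of_commute (-M) M ((Commute.refl M).neg_left), neg_add_cancel,
      NormedSpace.exp_zero]
  -- translation invariance of E
  have hinv : ∀ k g h : G, E (g + k) (h + k) = E g h := by
    intro k g h
    set T : Matrix G G ℂ := (Equiv.addRight k).toPEquiv.toMatrix with hT
    have hcommA : Commute A T := by
      show A * T = T * A
      rw [hT, PEquiv.toMatrix_toPEquiv_mul, PEquiv.mul_toMatrix_toPEquiv]
      ext u v
      simp only [submatrix_apply, id_eq, Equiv.coe_addRight, Equiv.addRight_symm, hA]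
      rw [show u - (v + -k) = u + k - v by abel]
    have hcomm : Commute E T := ((hcommA.smul_left (Complex.I * (t : ℂ))).exp_left)
    have h3 : E.submatrix (⇑(Equiv.addRight k)) id = E.submatrix id ⇑(Equiv.addRight k).symm := by
      rw [← PEquiv.toMatrix_toPEquiv_mul, ← PEquiv.mul_toMatrix_toPEquiv]
      exact hcomm.symm
    have h4 := congrFun (congrFun h3 g) (h + k)
    simp only [submatrix_apply, id_eq, Equiv.coe_addRight, Equiv.addRight_symm,
      add_neg_cancel_right] at h4
    exact h4
  -- permMatrix entries
  have hPapp : ∀ (σ : Equiv.Perm G) (i j : G),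
      (σ.permMatrix ℂ) i j = if σ i = j then 1 else 0 := by
    intro σ i j
    simp [Equiv.Perm.permMatrix, PEquiv.toMatrix_apply, Equiv.toPEquiv_apply, Option.mem_def,
      eq_comm]
  -- forward direction
  have fwd : (∃ x y : G, x ≠ y ∧
        E *ᵥ (Pi.single x 1 : G → ℂ) = α • (Pi.single x 1 : G → ℂ) + β • (Pi.single y 1 : G → ℂ)) →
      (∃ σ : Equiv.Perm G, (∀ g : G, σ g ≠ g) ∧ σ * σ = 1 ∧
        (σ.permMatrix ℂ)ᵀ = σ.permMatrix ℂ ∧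
        E = α • (1 : Matrix G G ℂ) + β • σ.permMatrix ℂ) := by
    rintro ⟨x, y, hxy, heq⟩
    have hent : ∀ g : G, E g x = α * (if g = x then 1 else 0) + β * (if g = y then 1 else 0) := by
      intro g
      have h0 := congrFun heq g
      simpa [mulVec_single, Pi.single_apply] using h0
    have hd0 : y - x ≠ 0 := sub_ne_zero.mpr (Ne.symm hxy)
    set d : G := y - x with hd
    have hEgen : ∀ g h : G,
        E g h = α * (if g = h then 1 else 0) + β * (if g - h = d then 1 else 0) := by
      intro g h
      have h1 : E g h = E (g - h + x) x := by
        have h2 := hinv (h - x) (g - h + x) x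
        rw [show g - h + x + (h - x) = g by abel, show x + (h - x) = h by abel] at h2
        exact h2
      have c1 : (g - h + x = x) ↔ g = h := by rw [add_eq_right, sub_eq_zero]
      have c2 : (g - h + x = y) ↔ g - h = d := by
        rw [hd, ← eq_sub_iff_add_eq]
      rw [h1, hent, if_congr c1 rfl rfl, if_congr c2 rfl rfl]
    have hdd : d + d = 0 := by
      have e1 : E x y = E y x := hEsymm y x
      rw [hEgen x y, hEgen y x] at e1
      rw [if_neg hxy, if_neg (Ne.symm hxy), if_pos hd.symm] at e1
      simp only [mul_zero, mul_one, zero_add] at e1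
      by_cases hxyd : x - y = d
      · calc d + d = (x - y) + (y - x) := by rw [hxyd, ← hd]
          _ = 0 := by abel
      · rw [if_neg hxyd, mul_zero] at e1
        exact absurd e1.symm hβ
    have hnegd : -d = d := neg_eq_of_add_eq_zero_left hdd
    refine ⟨Equiv.addRight d, ?_, ?_, ?_, ?_⟩
    · intro g
      simp only [Equiv.coe_addRight]
      intro hgd
      exact hd0 (by rwa [add_eq_left] at hgd)
    · ext g
      simp only [Equiv.Perm.mul_apply, Equiv.coe_addRight, Equiv.Perm.one_apply]
      rw [add_assoc, hdd, add_zero]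
    · ext i j
      rw [transpose_apply, hPapp, hPapp]
      simp only [Equiv.coe_addRight]
      exact if_congr ⟨fun hh => by rw [← hh, add_assoc, hdd, add_zero],
        fun hh => by rw [← hh, add_assoc, hdd, add_zero]⟩ rfl rfl
    · ext g h
      rw [Matrix.add_apply, Matrix.smul_apply, Matrix.smul_apply, Matrix.one_apply, hPapp,
        smul_eq_mul, smul_eq_mul, hEgen g h]
      simp only [Equiv.coe_addRight]
      have c : g - h = d ↔ g + d = h := by
        constructor
        · intro hh
          rw [sub_eq_iff_eq_add] at hh
          rw [hh, add_comm d h, add_assoc, hdd, add_zero]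
        · intro hh
          rw [← hh, show g - (g + d) = -d by abel, hnegd]
      rw [if_congr c rfl rfl]
      rfl
    -- backward direction
  have bwd : (∃ σ : Equiv.Perm G, (∀ g : G, σ g ≠ g) ∧ σ * σ = 1 ∧
        (σ.permMatrix ℂ)ᵀ = σ.permMatrix ℂ ∧
        E = α • (1 : Matrix G G ℂ) + β • σ.permMatrix ℂ) →
      (∃ x y : G, x ≠ y ∧
        E *ᵥ (Pi.single x 1 : G → ℂ) =
          α • (Pi.single x 1 : G → ℂ) + β • (Pi.single y 1 : G → ℂ)) := by
    rintro ⟨σ, hfix, hσ2, hsymmP, hHt'⟩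
    have hσσ : ∀ g : G, σ (σ g) = g := fun g => by
      have := Equiv.ext_iff.mp hσ2 g
      simpa [Equiv.Perm.mul_apply] using this
    refine ⟨0, σ 0, Ne.symm (hfix 0), ?_⟩
    funext g
    have h0 := congrFun (congrFun hHt' g) (0 : G)
    simp only [Matrix.add_apply, Matrix.smul_apply, smul_eq_mul, Matrix.one_apply, hPapp] at h0
    have c : σ g = 0 ↔ g = σ 0 := by
      constructor
      · intro hh; rw [← hh, hσσ]
      · intro hh; rw [hh, hσσ]
    rw [if_congr c rfl rfl] at h0
    simp only [mulVec_single_one, col_apply, Pi.add_apply, Pi.smul_apply, smul_eq_mul, Pi.single_apply, mul_one]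
    exact h0
  refine ⟨⟨fwd, bwd⟩, ?_⟩
  -- the extra relation
  intro hFR
  obtain ⟨σ, hfix, hσ2, hsymmP, hHt'⟩ := fwd hFR
  set P : Matrix G G ℂ := σ.permMatrix ℂ with hP
  have hσσ : ∀ g : G, σ (σ g) = g := fun g => by
    have := Equiv.ext_iff.mp hσ2 g
    simpa [Equiv.Perm.mul_apply] using this
  have hPH : Pᴴ = P := by
    ext i j
    rw [conjTranspose_apply, show P j i = P i j from by rw [← transpose_apply P i j, hsymmP]]
    simp only [hP, hPapp]
    split_ifs <;> simp
  have hPP : P * P = 1 := by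
    have h5 : σ.toPEquiv.toMatrix * P = P.submatrix (⇑σ) id := PEquiv.toMatrix_toPEquiv_mul σ P
    rw [show P * P = P.submatrix (⇑σ) id from h5]
    ext i j
    rw [submatrix_apply, id_eq]
    simp only [hP, hPapp, hσσ, Matrix.one_apply]
  have hEH : Eᴴ = (starRingEnd ℂ α) • 1 + (starRingEnd ℂ β) • P := by
    rw [hHt', conjTranspose_add, conjTranspose_smul, conjTranspose_smul, conjTranspose_one, hPH]
    rfl
  have hXX := hU
  rw [hEH, hHt'] at hXX
  have expand : ((starRingEnd ℂ α) • (1 : Matrix G G ℂ) + (starRingEnd ℂ β) • P) *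
      (α • (1 : Matrix G G ℂ) + β • P)
      = (starRingEnd ℂ α * α + starRingEnd ℂ β * β) • (1 : Matrix G G ℂ)
        + (starRingEnd ℂ α * β + starRingEnd ℂ β * α) • P := by
    simp only [add_mul, mul_add, smul_mul_assoc, mul_smul_comm, one_mul, mul_one, hPP,
      smul_smul, smul_add, add_smul]
    module
  rw [expand] at hXX
  have hconst : starRingEnd ℂ α * α + starRingEnd ℂ β * β = 1 := by
    rw [mul_comm (starRingEnd ℂ α), mul_comm (starRingEnd ℂ β), Complex.mul_conj,
      Complex.mul_conj, Complex.normSq_eq_norm_sq, Complex.normSq_eq_norm_sq]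
    norm_cast
  rw [hconst, one_smul] at hXX
  have hc : (starRingEnd ℂ α * β + starRingEnd ℂ β * α) • P = 0 := by
    have := hXX
    rwa [add_eq_left] at this
  have hc0 : starRingEnd ℂ α * β + starRingEnd ℂ β * α = 0 := by
    have h6 := congrFun (congrFun hc 0) (σ 0)
    simp only [hP, Matrix.smul_apply, hPapp, Matrix.zero_apply, smul_eq_mul, if_pos rfl,
      mul_one] at h6
    simpa using h6
  linear_combination hc0
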